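/- arXiv:1911.07717 — 4 statements merged into one kernel-verified Lean document; each statement's English description precedes it below -/
import Mathlib

section
/- Let 𝔫 be a finite-dimensional real nilpotent Lie algebra and L : 𝔫 → 𝔫 a hyperbolic Lie algebra automorphism admitting a real eigenbasis and having sorted spectrum. Then [𝔫^s, 𝔫^u] = 0, and consequently 𝔫 = 𝔫^s ⊕ 𝔫^u as a direct sum of Lie algebras (both 𝔫^s and 𝔫^u are ideals of 𝔫 and 𝔫 is their internal direct sum). -/
/-!
Statement 0: for a Lie algebra automorphism `L` of a finite-dimensional real nilpotent Lie
algebra `𝔫` admitting a real eigenbasis, the `L`-grading satisfies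
`𝔫_(i) = [𝔫_(1), 𝔫_(i-1)]` for all `i ≥ 2`.
-/

/-- The span of all brackets `⁅x, y⁆` with `x ∈ A`, `y ∈ B`. -/
def bracketSpan {𝔫 : Type*} [LieRing 𝔫] [LieAlgebra ℝ 𝔫] (A B : Submodule ℝ 𝔫) :
    Submodule ℝ 𝔫 :=
  Submodule.span ℝ {z : 𝔫 | ∃ x ∈ A, ∃ y ∈ B, z = ⁅x, y⁆}

/-- The lower central series of a subalgebra `A` (as a submodule of `𝔫`), 0-indexed:
`lcsOf A i` is the paper's `A^{i+1}`, so `lcsOf A 0 = A = A¹` and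
`A^{i+1} = ⁅A, A^i⁆`. -/
def lcsOf {𝔫 : Type*} [LieRing 𝔫] [LieAlgebra ℝ 𝔫] (A : Submodule ℝ 𝔫) :
    ℕ → Submodule ℝ 𝔫
  | 0 => A
  | (i + 1) => bracketSpan A (lcsOf A i)

/-- `v` is an eigenvector of `L` (with some real eigenvalue). -/
def IsEigvec {𝔫 : Type*} [LieRing 𝔫] [LieAlgebra ℝ 𝔫] (L : 𝔫 ≃ₗ⁅ℝ⁆ 𝔫) (v : 𝔫) : Prop :=
  v ≠ 0 ∧ ∃ c : ℝ, L v = c • v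

/-- The `L`-grading of the subalgebra `A ⊆ 𝔫`: for `i ≥ 1` the `i`-th piece is the span of the
eigenvectors of `L` lying in `A^i` but not in `A^{i+1}`; the (unused) `0`-th piece is `⊥`.
The paper's `𝔫_(i)` is `grading L ⊤ i`. -/
def grading {𝔫 : Type*} [LieRing 𝔫] [LieAlgebra ℝ 𝔫] (L : 𝔫 ≃ₗ⁅ℝ⁆ 𝔫) (A : Submodule ℝ 𝔫) :
    ℕ → Submodule ℝ 𝔫
  | 0 => ⊥
  | (i + 1) => Submodule.span ℝ
      {v : 𝔫 | IsEigvec L v ∧ v ∈ lcsOf A i ∧ v ∉ lcsOf A (i + 1)}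

/-- `L` admits a basis of real eigenvectors. -/
def HasRealEigenbasis {𝔫 : Type*} [LieRing 𝔫] [LieAlgebra ℝ 𝔫] (L : 𝔫 ≃ₗ⁅ℝ⁆ 𝔫) : Prop :=
  ∃ (n : ℕ) (b : Module.Basis (Fin n) ℝ 𝔫) (c : Fin n → ℝ), ∀ i, L (b i) = c i • b i


/-- The unstable subspace `𝔫^u`: the span of the eigenvectors of `L` whose eigenvalue has
modulus `> 1`. -/
def unstable {𝔫 : Type*} [LieRing 𝔫] [LieAlgebra ℝ 𝔫] (L : 𝔫 ≃ₗ⁅ℝ⁆ 𝔫) : Submodule ℝ 𝔫 :=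
  Submodule.span ℝ {v : 𝔫 | v ≠ 0 ∧ ∃ c : ℝ, L v = c • v ∧ 1 < |c|}

/-- The stable subspace `𝔫^s`: the span of the eigenvectors of `L` whose eigenvalue has
modulus `< 1`. -/
def stable {𝔫 : Type*} [LieRing 𝔫] [LieAlgebra ℝ 𝔫] (L : 𝔫 ≃ₗ⁅ℝ⁆ 𝔫) : Submodule ℝ 𝔫 :=
  Submodule.span ℝ {v : 𝔫 | v ≠ 0 ∧ ∃ c : ℝ, L v = c • v ∧ |c| < 1}

/-- `L` is hyperbolic: no eigenvalue has modulus `1`. -/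
def IsHyperbolic {𝔫 : Type*} [LieRing 𝔫] [LieAlgebra ℝ 𝔫] (L : 𝔫 ≃ₗ⁅ℝ⁆ 𝔫) : Prop :=
  ∀ (v : 𝔫) (c : ℝ), v ≠ 0 → L v = c • v → |c| ≠ 1

/-- `L` has sorted unstable spectrum: if `k < j` and `v ∈ 𝔫_(k)`, `w ∈ 𝔫_(j)` are unstable
eigenvectors with eigenvalues `cv`, `cw`, then `|cv| < |cw|`. -/
def SortedUnstableSpectrum {𝔫 : Type*} [LieRing 𝔫] [LieAlgebra ℝ 𝔫] (L : 𝔫 ≃ₗ⁅ℝ⁆ 𝔫) : Prop :=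
  ∀ (k j : ℕ), k < j → ∀ (v w : 𝔫) (cv cw : ℝ),
    v ≠ 0 → L v = cv • v → 1 < |cv| → v ∈ grading L ⊤ k →
    w ≠ 0 → L w = cw • w → 1 < |cw| → w ∈ grading L ⊤ j →
    |cv| < |cw|

/-- `L` has sorted spectrum: `L` has sorted unstable spectrum and `L⁻¹` has sorted unstable
spectrum. -/
def SortedSpectrum {𝔫 : Type*} [LieRing 𝔫] [LieAlgebra ℝ 𝔫] (L : 𝔫 ≃ₗ⁅ℝ⁆ 𝔫) : Prop :=
  SortedUnstableSpectrum L ∧ SortedUnstableSpectrum L.symm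

section Aux

variable {𝔫 : Type*} [LieRing 𝔫] [LieAlgebra ℝ 𝔫]

lemma lcsOf_top_le_lowerCentralSeries (i : ℕ) :
    lcsOf (⊤ : Submodule ℝ 𝔫) i ≤ (LieModule.lowerCentralSeries ℝ 𝔫 𝔫 i : Submodule ℝ 𝔫) := by
  induction i with
  | zero => simp [lcsOf]
  | succ i ih =>
      rw [show lcsOf (⊤ : Submodule ℝ 𝔫) (i+1) = bracketSpan ⊤ (lcsOf ⊤ i) from rfl,
        bracketSpan]
      rw [Submodule.span_le]
      rintro z ⟨x, -, y, hy, rfl⟩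
      rw [LieModule.lowerCentralSeries_succ]
      exact LieSubmodule.lie_mem_lie (LieSubmodule.mem_top x) (ih hy)

lemma lcsOf_top_antitone : ∀ {i j : ℕ}, i ≤ j →
    lcsOf (⊤ : Submodule ℝ 𝔫) j ≤ lcsOf (⊤ : Submodule ℝ 𝔫) i := by
  have key : ∀ i : ℕ, lcsOf (⊤ : Submodule ℝ 𝔫) (i+1) ≤ lcsOf (⊤ : Submodule ℝ 𝔫) i := by
    intro i
    induction i with
    | zero => exact le_top
    | succ i ih =>
        refine Submodule.span_le.2 ?_
        rintro z ⟨x, hx, y, hy, rfl⟩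
        exact Submodule.subset_span ⟨x, hx, y, ih hy, rfl⟩
  intro i j hij
  exact antitone_nat_of_succ_le key hij

lemma exists_lcs_index [FiniteDimensional ℝ 𝔫] [LieRing.IsNilpotent 𝔫]
    {v : 𝔫} (hv : v ≠ 0) :
    ∃ k, v ∈ lcsOf (⊤ : Submodule ℝ 𝔫) k ∧ v ∉ lcsOf (⊤ : Submodule ℝ 𝔫) (k+1) := by
  classical
  obtain ⟨N, hN⟩ := LieModule.IsNilpotent.nilpotent ℝ 𝔫 𝔫
  have hex : ∃ i, v ∉ lcsOf (⊤ : Submodule ℝ 𝔫) i := by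
    refine ⟨N, fun hmem => hv ?_⟩
    have := lcsOf_top_le_lowerCentralSeries (𝔫 := 𝔫) N hmem
    rw [hN] at this
    simpa using this
  classical
  have hm := Nat.find_spec hex
  have hm0 : Nat.find hex ≠ 0 := by
    intro h0
    rw [h0] at hm
    exact hm (by simp [lcsOf])
  obtain ⟨k, hk⟩ := Nat.exists_eq_succ_of_ne_zero hm0
  refine ⟨k, ?_, ?_⟩
  · by_contra hnot
    have h5 : Nat.find hex ≤ k := Nat.find_le hnot
    omega
  · have hk1 : k + 1 = Nat.find hex := by omega
    rw [hk1]; exact hm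

lemma eigvec_mem_grading (L : 𝔫 ≃ₗ⁅ℝ⁆ 𝔫) {v : 𝔫} {a : ℝ} (hv : v ≠ 0)
    (hLv : L v = a • v) {k : ℕ} (h1 : v ∈ lcsOf (⊤ : Submodule ℝ 𝔫) k)
    (h2 : v ∉ lcsOf (⊤ : Submodule ℝ 𝔫) (k+1)) :
    v ∈ grading L ⊤ (k+1) :=
  Submodule.subset_span ⟨⟨hv, a, hLv⟩, h1, h2⟩

/-- Key lemma: bracket of a stable eigenvector with an unstable eigenvector vanishes. -/
lemma key_bracket_zero [FiniteDimensional ℝ 𝔫] [LieRing.IsNilpotent 𝔫]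
    (L : 𝔫 ≃ₗ⁅ℝ⁆ 𝔫) (hhyp : IsHyperbolic L) (hsort : SortedSpectrum L)
    {v w : 𝔫} {a b : ℝ} (hv : v ≠ 0) (hLv : L v = a • v) (ha : |a| < 1)
    (hw : w ≠ 0) (hLw : L w = b • w) (hb : 1 < |b|) : ⁅v, w⁆ = 0 := by
  by_contra hne
  have ha0 : a ≠ 0 := by
    rintro rfl
    apply hv
    have h0 : L v = 0 := by rw [hLv, zero_smul]
    have h1 := congrArg L.symm h0
    rwa [L.symm_apply_apply, show L.symm 0 = 0 from L.symm.toLinearEquiv.map_zero] at h1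
  have hb0 : b ≠ 0 := by
    intro h; rw [h, abs_zero] at hb; linarith
  have hLbr : L ⁅v, w⁆ = (a * b) • ⁅v, w⁆ := by
    rw [LieEquiv.map_lie, hLv, hLw, smul_lie, lie_smul, smul_smul]
  obtain ⟨kv, hkv1, hkv2⟩ := exists_lcs_index (v := v) hv
  obtain ⟨kw, hkw1, hkw2⟩ := exists_lcs_index (v := w) hw
  obtain ⟨m, hm1, hm2⟩ := exists_lcs_index (v := ⁅v, w⁆) hne
  have hbr_kw : ⁅v, w⁆ ∈ lcsOf (⊤ : Submodule ℝ 𝔫) (kw + 1) :=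
    Submodule.subset_span ⟨v, Submodule.mem_top, w, hkw1, rfl⟩
  have hbr_kv : ⁅v, w⁆ ∈ lcsOf (⊤ : Submodule ℝ 𝔫) (kv + 1) := by
    have : ⁅w, v⁆ ∈ lcsOf (⊤ : Submodule ℝ 𝔫) (kv + 1) :=
      Submodule.subset_span ⟨w, Submodule.mem_top, v, hkv1, rfl⟩
    rw [show ⁅v, w⁆ = -⁅w, v⁆ from (lie_skew v w).symm ▸ rfl]
    · exact neg_mem this
  have hmkw : kw + 1 < m + 1 := by
    by_contra hc
    exact hm2 (lcsOf_top_antitone (by omega) hbr_kw)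
  have hmkv : kv + 1 < m + 1 := by
    by_contra hc
    exact hm2 (lcsOf_top_antitone (by omega) hbr_kv)
  have hab_ne : |a * b| ≠ 1 := hhyp _ _ hne hLbr
  rcases lt_or_gt_of_ne hab_ne with hab | hab
  · -- |a*b| < 1 : use sorted stable spectrum (L.symm)
    have hLsv : L.symm v = a⁻¹ • v := by
      have h2 : L (a⁻¹ • v) = v := by
        rw [show L (a⁻¹ • v) = a⁻¹ • L v from L.toLinearEquiv.map_smul a⁻¹ v, hLv,
          smul_smul, inv_mul_cancel₀ ha0, one_smul]
      have h3 := congrArg L.symm h2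
      rw [L.symm_apply_apply] at h3
      exact h3.symm
    have hLsbr : L.symm ⁅v, w⁆ = (a * b)⁻¹ • ⁅v, w⁆ := by
      have h2 : L ((a * b)⁻¹ • ⁅v, w⁆) = ⁅v, w⁆ := by
        rw [show L ((a * b)⁻¹ • ⁅v, w⁆) = (a * b)⁻¹ • L ⁅v, w⁆ from
          L.toLinearEquiv.map_smul _ _, hLbr, smul_smul,
          inv_mul_cancel₀ (mul_ne_zero ha0 hb0), one_smul]
      have h3 := congrArg L.symm h2
      rw [L.symm_apply_apply] at h3
      exact h3.symm
    have ha_pos : 0 < |a| := abs_pos.mpr ha0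
    have hainv : 1 < |a⁻¹| := by
      rw [abs_inv]
      exact (one_lt_inv₀ ha_pos).mpr ha
    have hab_pos : 0 < |a * b| := abs_pos.mpr (mul_ne_zero ha0 hb0)
    have habinv : 1 < |(a * b)⁻¹| := by
      rw [abs_inv]
      exact (one_lt_inv₀ hab_pos).mpr hab
    have hgv : v ∈ grading L.symm ⊤ (kv + 1) :=
      eigvec_mem_grading L.symm hv hLsv hkv1 hkv2
    have hgbr : ⁅v, w⁆ ∈ grading L.symm ⊤ (m + 1) :=
      eigvec_mem_grading L.symm hne hLsbr hm1 hm2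
    have := hsort.2 (kv + 1) (m + 1) hmkv v ⁅v, w⁆ a⁻¹ (a * b)⁻¹
      hv hLsv hainv hgv hne hLsbr habinv hgbr
    rw [abs_inv, abs_inv, abs_mul] at this
    have hb_pos : (0:ℝ) < |b| := by linarith
    have h1 : |a| * |b| < |a| := (inv_lt_inv₀ ha_pos (by positivity)).mp this
    nlinarith
  · -- 1 < |a*b| : use sorted unstable spectrum
    have hgw : w ∈ grading L ⊤ (kw + 1) := eigvec_mem_grading L hw hLw hkw1 hkw2
    have hgbr : ⁅v, w⁆ ∈ grading L ⊤ (m + 1) :=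
      eigvec_mem_grading L hne hLbr hm1 hm2
    have := hsort.1 (kw + 1) (m + 1) hmkw w ⁅v, w⁆ b (a * b)
      hw hLw hb hgw hne hLbr hab hgbr
    rw [abs_mul] at this
    nlinarith

end Aux


/-- for a hyperbolic automorphism with real eigenbasis and sorted spectrum of a
finite-dimensional real nilpotent Lie algebra, `⁅𝔫^s, 𝔫^u⁆ = 0`; consequently both `𝔫^s` and
`𝔫^u` are ideals and `𝔫 = 𝔫^s ⊕ 𝔫^u` as an internal direct sum of Lie algebras. -/
theorem stable_bracket_unstable_eq_zero
    {𝔫 : Type*} [LieRing 𝔫] [LieAlgebra ℝ 𝔫] [FiniteDimensional ℝ 𝔫]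
    [LieRing.IsNilpotent 𝔫]
    (L : 𝔫 ≃ₗ⁅ℝ⁆ 𝔫) (hL : HasRealEigenbasis L)
    (hhyp : IsHyperbolic L) (hsort : SortedSpectrum L) :
    (∀ x ∈ stable L, ∀ y ∈ unstable L, ⁅x, y⁆ = 0) ∧
    (∀ z : 𝔫, ∀ x ∈ stable L, ⁅z, x⁆ ∈ stable L) ∧
    (∀ z : 𝔫, ∀ y ∈ unstable L, ⁅z, y⁆ ∈ unstable L) ∧
    stable L ⊔ unstable L = ⊤ ∧
    stable L ⊓ unstable L = ⊥ := by
  classical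
  obtain ⟨n, b, c, hb⟩ := hL
  -- Part 1: brackets of stable with unstable vanish
  have part1 : ∀ x ∈ stable L, ∀ y ∈ unstable L, ⁅x, y⁆ = 0 := by
    intro x hx
    induction hx using Submodule.span_induction with
    | mem x hx =>
        obtain ⟨hx0, a, hLa, ha⟩ := hx
        intro y hy
        induction hy using Submodule.span_induction with
        | mem y hy =>
            obtain ⟨hy0, d, hLd, hd⟩ := hy
            exact key_bracket_zero L hhyp hsort hx0 hLa ha hy0 hLd hd
        | zero => simp
        | add y z hy hz ihy ihz => rw [lie_add, ihy, ihz, add_zero]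
        | smul r y hy ihy => rw [lie_smul, ihy, smul_zero]
    | zero => intro y hy; rw [zero_lie]
    | add x z hx hz ihx ihz => intro y hy; rw [add_lie, ihx y hy, ihz y hy, add_zero]
    | smul r x hx ihx => intro y hy; rw [smul_lie, ihx y hy, smul_zero]
  -- stable is closed under brackets with stable
  have hss : ∀ x ∈ stable L, ∀ y ∈ stable L, ⁅x, y⁆ ∈ stable L := by
    intro x hx
    induction hx using Submodule.span_induction with
    | mem x hx =>
        obtain ⟨hx0, a, hLa, ha⟩ := hx
        intro y hy
        induction hy using Submodule.span_induction with
        | mem y hy =>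
            obtain ⟨hy0, d, hLd, hd⟩ := hy
            by_cases hz : ⁅x, y⁆ = 0
            · rw [hz]; exact zero_mem _
            · refine Submodule.subset_span ⟨hz, a * d, ?_, ?_⟩
              · rw [LieEquiv.map_lie, hLa, hLd, smul_lie, lie_smul, smul_smul]
              · rw [abs_mul]; nlinarith [abs_nonneg a, abs_nonneg d]
        | zero => rw [lie_zero]; exact zero_mem _
        | add y z hy hz ihy ihz => rw [lie_add]; exact add_mem ihy ihz
        | smul r y hy ihy => rw [lie_smul]; exact Submodule.smul_mem _ _ ihy
    | zero => intro y hy; rw [zero_lie]; exact zero_mem _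
    | add x z hx hz ihx ihz =>
        intro y hy; rw [add_lie]; exact add_mem (ihx y hy) (ihz y hy)
    | smul r x hx ihx =>
        intro y hy; rw [smul_lie]; exact Submodule.smul_mem _ _ (ihx y hy)
  -- unstable is closed under brackets with unstable
  have huu : ∀ x ∈ unstable L, ∀ y ∈ unstable L, ⁅x, y⁆ ∈ unstable L := by
    intro x hx
    induction hx using Submodule.span_induction with
    | mem x hx =>
        obtain ⟨hx0, a, hLa, ha⟩ := hx
        intro y hy
        induction hy using Submodule.span_induction with
        | mem y hy =>
            obtain ⟨hy0, d, hLd, hd⟩ := hy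
            by_cases hz : ⁅x, y⁆ = 0
            · rw [hz]; exact zero_mem _
            · refine Submodule.subset_span ⟨hz, a * d, ?_, ?_⟩
              · rw [LieEquiv.map_lie, hLa, hLd, smul_lie, lie_smul, smul_smul]
              · rw [abs_mul]; nlinarith [abs_nonneg a, abs_nonneg d]
        | zero => rw [lie_zero]; exact zero_mem _
        | add y z hy hz ihy ihz => rw [lie_add]; exact add_mem ihy ihz
        | smul r y hy ihy => rw [lie_smul]; exact Submodule.smul_mem _ _ ihy
    | zero => intro y hy; rw [zero_lie]; exact zero_mem _
    | add x z hx hz ihx ihz =>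
        intro y hy; rw [add_lie]; exact add_mem (ihx y hy) (ihz y hy)
    | smul r x hx ihx =>
        intro y hy; rw [smul_lie]; exact Submodule.smul_mem _ _ (ihx y hy)
  -- sup = ⊤
  have hsup : stable L ⊔ unstable L = ⊤ := by
    rw [eq_top_iff, ← b.span_eq, Submodule.span_le]
    rintro x ⟨i, rfl⟩
    have hne := b.ne_zero i
    rcases (hhyp (b i) (c i) hne (hb i)).lt_or_gt with h | h
    · exact Submodule.mem_sup_left (Submodule.subset_span ⟨hne, c i, hb i, h⟩)
    · exact Submodule.mem_sup_right (Submodule.subset_span ⟨hne, c i, hb i, h⟩)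
  -- coordinates of eigenvectors
  have heig_supp : ∀ {v : 𝔫} {a : ℝ}, L v = a • v → ∀ j, b.repr v j ≠ 0 → c j = a := by
    intro v a hLv j hj
    have key : b.repr (L v) j = c j * b.repr v j := by
      have hsum : L v = ∑ i, (c i * b.repr v i) • b i := by
        conv_lhs => rw [show L v = L.toLinearEquiv v from rfl, ← b.sum_repr v]
        rw [map_sum]
        refine Finset.sum_congr rfl fun i _ => ?_
        rw [map_smul]
        rw [show L.toLinearEquiv (b i) = c i • b i from hb i, smul_smul, mul_comm]
      rw [hsum]
      simp [Finset.sum_apply', Module.Basis.repr_self, Finsupp.single_apply]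
    rw [hLv] at key
    simp only [map_smul, Finsupp.smul_apply, smul_eq_mul] at key
    exact mul_right_cancel₀ hj (by linarith)
  have hstab_le : stable L ≤ Submodule.span ℝ (b '' {i | |c i| < 1}) := by
    rw [stable, Submodule.span_le]
    rintro v ⟨hv0, a, hLv, ha⟩
    rw [SetLike.mem_coe, b.mem_span_image]
    intro j hj
    rw [Finset.mem_coe, Finsupp.mem_support_iff] at hj
    have := heig_supp hLv j hj
    simp only [Set.mem_setOf_eq, this]
    exact ha
  have hunst_le : unstable L ≤ Submodule.span ℝ (b '' {i | 1 < |c i|}) := by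
    rw [unstable, Submodule.span_le]
    rintro v ⟨hv0, a, hLv, ha⟩
    rw [SetLike.mem_coe, b.mem_span_image]
    intro j hj
    rw [Finset.mem_coe, Finsupp.mem_support_iff] at hj
    have := heig_supp hLv j hj
    simp only [Set.mem_setOf_eq, this]
    exact ha
  -- inf = ⊥
  have hinf : stable L ⊓ unstable L = ⊥ := by
    rw [eq_bot_iff]
    rintro x ⟨hxs, hxu⟩
    have h1 := hstab_le hxs
    have h2 := hunst_le hxu
    rw [b.mem_span_image] at h1 h2
    have hsupp : (b.repr x).support = ∅ := by
      rw [Finset.eq_empty_iff_forall_notMem]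
      intro j hj
      have hs := h1 hj
      have hu := h2 hj
      simp only [Set.mem_setOf_eq] at hs hu
      linarith
    have hr0 : b.repr x = 0 := Finsupp.support_eq_empty.mp hsupp
    have : x = 0 := by
      have := b.repr.map_eq_zero_iff.mp hr0
      exact this
    rw [this]
    exact Submodule.mem_bot ℝ |>.mpr rfl
  refine ⟨part1, ?_, ?_, hsup, hinf⟩
  · intro z x hx
    have hz : z ∈ stable L ⊔ unstable L := hsup ▸ Submodule.mem_top
    obtain ⟨zs, hzs, zu, hzu, rfl⟩ := Submodule.mem_sup.mp hz
    rw [add_lie]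
    refine add_mem (hss zs hzs x hx) ?_
    have h0 : ⁅x, zu⁆ = 0 := part1 x hx zu hzu
    have hz0 : ⁅zu, x⁆ = 0 := by rw [← lie_skew, h0, neg_zero]
    rw [hz0]; exact zero_mem _
  · intro z y hy
    have hz : z ∈ stable L ⊔ unstable L := hsup ▸ Submodule.mem_top
    obtain ⟨zs, hzs, zu, hzu, rfl⟩ := Submodule.mem_sup.mp hz
    rw [add_lie]
    have hz0 : ⁅zs, y⁆ = 0 := part1 zs hzs y hy
    rw [hz0, zero_add]
    exact huu zu hzu y hy
end

section
/- Let 𝔫 be a finite-dimensional real nilpotent Lie algebra and L : 𝔫 → 𝔫 a hyperbolic Lie algebra automorphism admitting a real eigenbasis and having sorted spectrum. Then for every i ≥ 1 the i-th term of the lower central series splits as 𝔫^i = (𝔫^s)^i ⊕ (𝔫^u)^i, where (𝔫^s)^i and (𝔫^u)^i denote the i-th terms of the lower central series of the subalgebras 𝔫^s and 𝔫^u. Consequently, for every i, the graded pieces satisfy 𝔫^u_(i) = 𝔫_(i) ∩ 𝔫^u and 𝔫^s_(i) = 𝔫_(i) ∩ 𝔫^s, where 𝔫^u_(i) (resp.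 𝔫^s_(i)) is the grading of 𝔫^u (resp. 𝔫^s) induced by the restriction of L. -/
section AuxBasic

variable {𝔫 : Type*} [LieRing 𝔫] [LieAlgebra ℝ 𝔫]

lemma lcsOf_zero (A : Submodule ℝ 𝔫) : lcsOf A 0 = A := rfl

lemma lcsOf_succ (A : Submodule ℝ 𝔫) (i : ℕ) :
    lcsOf A (i + 1) = bracketSpan A (lcsOf A i) := rfl

lemma bracketSpan_mono {A A' B B' : Submodule ℝ 𝔫} (hA : A ≤ A') (hB : B ≤ B') :
    bracketSpan A B ≤ bracketSpan A' B' :=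
  Submodule.span_mono (by rintro z ⟨x, hx, y, hy, rfl⟩; exact ⟨x, hA hx, y, hB hy, rfl⟩)

lemma bracketSpan_le {A B C : Submodule ℝ 𝔫}
    (h : ∀ x ∈ A, ∀ y ∈ B, ⁅x, y⁆ ∈ C) : bracketSpan A B ≤ C :=
  Submodule.span_le.2 (by rintro z ⟨x, hx, y, hy, rfl⟩; exact h x hx y hy)

lemma bracket_mem_bracketSpan {A B : Submodule ℝ 𝔫} {x y : 𝔫} (hx : x ∈ A) (hy : y ∈ B) :
    ⁅x, y⁆ ∈ bracketSpan A B := Submodule.subset_span ⟨x, hx, y, hy, rfl⟩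

lemma bracket_mem_of_forall_gen {s t : Set 𝔫} {C : Submodule ℝ 𝔫}
    (h : ∀ x ∈ s, ∀ y ∈ t, ⁅x, y⁆ ∈ C) :
    ∀ x ∈ Submodule.span ℝ s, ∀ y ∈ Submodule.span ℝ t, ⁅x, y⁆ ∈ C := by
  have key : ∀ x ∈ s, ∀ y ∈ Submodule.span ℝ t, ⁅x, y⁆ ∈ C := by
    intro x hx y hy
    induction hy using Submodule.span_induction with
    | mem y hy => exact h x hx y hy
    | zero => rw [lie_zero]; exact C.zero_mem
    | add y z _ _ hy hz => rw [lie_add]; exact C.add_mem hy hz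
    | smul a y _ hy => rw [lie_smul]; exact C.smul_mem a hy
  intro x hx y hy
  induction hx using Submodule.span_induction with
  | mem x hx => exact key x hx y hy
  | zero => rw [zero_lie]; exact C.zero_mem
  | add x z _ _ h1 h2 => rw [add_lie]; exact C.add_mem h1 h2
  | smul a x _ h1 => rw [smul_lie]; exact C.smul_mem a h1

lemma lcsOf_mono {A B : Submodule ℝ 𝔫} (h : A ≤ B) : ∀ i, lcsOf A i ≤ lcsOf B i
  | 0 => h
  | (i + 1) => bracketSpan_mono h (lcsOf_mono h i)

lemma lcsOf_le_self {A : Submodule ℝ 𝔫} (h : ∀ x ∈ A, ∀ y ∈ A, ⁅x, y⁆ ∈ A) :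
    ∀ i, lcsOf A i ≤ A
  | 0 => le_rfl
  | (i + 1) => bracketSpan_le fun x hx y hy => h x hx y (lcsOf_le_self h i hy)

lemma lcsOf_top_succ_le : ∀ i, lcsOf (⊤ : Submodule ℝ 𝔫) (i + 1) ≤ lcsOf ⊤ i
  | 0 => le_top
  | (i + 1) => bracketSpan_mono le_rfl (lcsOf_top_succ_le i)

lemma lcsOf_top_antitone_s5 : Antitone (lcsOf (⊤ : Submodule ℝ 𝔫)) :=
  antitone_nat_of_succ_le lcsOf_top_succ_le

lemma lcsOf_top_le_lcs :
    ∀ i, lcsOf (⊤ : Submodule ℝ 𝔫) i ≤ (LieModule.lowerCentralSeries ℝ 𝔫 𝔫 i).toSubmodule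
  | 0 => le_top
  | (i + 1) => by
      rw [lcsOf_succ]
      refine bracketSpan_le fun x _ y hy => ?_
      have : ⁅x, y⁆ ∈ ⁅(⊤ : LieIdeal ℝ 𝔫), LieModule.lowerCentralSeries ℝ 𝔫 𝔫 i⁆ :=
        LieSubmodule.lie_mem_lie (LieSubmodule.mem_top x) (lcsOf_top_le_lcs i hy)
      rw [LieModule.lowerCentralSeries_succ]
      exact this

lemma exists_degree [LieRing.IsNilpotent 𝔫] {v : 𝔫} (hv : v ≠ 0) :
    ∃ j, v ∈ lcsOf (⊤ : Submodule ℝ 𝔫) j ∧ v ∉ lcsOf (⊤ : Submodule ℝ 𝔫) (j + 1) := by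
  classical
  obtain ⟨k, hk⟩ := LieModule.IsNilpotent.nilpotent ℝ 𝔫 𝔫
  have hnot : ∃ m, v ∉ lcsOf (⊤ : Submodule ℝ 𝔫) m := by
    refine ⟨k, fun h => hv ?_⟩
    have := lcsOf_top_le_lcs k h
    rw [hk] at this
    simpa using this
  have hm : v ∉ lcsOf (⊤ : Submodule ℝ 𝔫) (Nat.find hnot) := Nat.find_spec hnot
  have hm0 : Nat.find hnot ≠ 0 := by
    intro h
    rw [h] at hm
    exact hm (by trivial)
  obtain ⟨j, hj⟩ := Nat.exists_eq_succ_of_ne_zero hm0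
  rw [hj, Nat.succ_eq_add_one] at hm
  refine ⟨j, not_not.1 (fun h => Nat.find_min hnot (by omega) h), hm⟩

end AuxBasic
section AuxL

variable {𝔫 : Type*} [LieRing 𝔫] [LieAlgebra ℝ 𝔫] (L : 𝔫 ≃ₗ⁅ℝ⁆ 𝔫)

lemma eig_ne_zero {v : 𝔫} {c : ℝ} (hv : v ≠ 0) (h : L v = c • v) : c ≠ 0 := by
  rintro rfl
  rw [zero_smul] at h
  have h0 : L (0 : 𝔫) = 0 := L.toLinearEquiv.map_zero
  exact hv (L.injective (h.trans h0.symm))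

lemma symm_eig {v : 𝔫} {c : ℝ} (hv : v ≠ 0) (h : L v = c • v) : L.symm v = c⁻¹ • v := by
  have hc := eig_ne_zero L hv h
  have hsmul : L.symm (c • v) = c • L.symm v := L.symm.toLinearEquiv.map_smul c v
  have h2 : v = c • L.symm v := by
    have h3 := congrArg L.symm h
    rw [L.symm_apply_apply] at h3
    exact hsmul ▸ h3
  calc L.symm v = c⁻¹ • (c • L.symm v) := by rw [smul_smul, inv_mul_cancel₀ hc, one_smul]
    _ = c⁻¹ • v := by rw [← h2]

lemma mem_stable {v : 𝔫} {c : ℝ} (hv : v ≠ 0) (h : L v = c • v) (hc : |c| < 1) :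
    v ∈ stable L := Submodule.subset_span ⟨hv, c, h, hc⟩

lemma mem_unstable {v : 𝔫} {c : ℝ} (hv : v ≠ 0) (h : L v = c • v) (hc : 1 < |c|) :
    v ∈ unstable L := Submodule.subset_span ⟨hv, c, h, hc⟩

lemma map_lie_eig {v w : 𝔫} {cv cw : ℝ} (hv : L v = cv • v) (hw : L w = cw • w) :
    L ⁅v, w⁆ = (cv * cw) • ⁅v, w⁆ := by
  rw [LieEquiv.map_lie, hv, hw, smul_lie, lie_smul, smul_smul]

lemma stable_bracket : ∀ x ∈ stable L, ∀ y ∈ stable L, ⁅x, y⁆ ∈ stable L := by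
  refine bracket_mem_of_forall_gen ?_
  rintro x ⟨hx0, cx, hx, hcx⟩ y ⟨hy0, cy, hy, hcy⟩
  by_cases hz : ⁅x, y⁆ = (0 : 𝔫)
  · rw [hz]; exact zero_mem _
  · refine mem_stable L hz (map_lie_eig L hx hy) ?_
    rw [abs_mul]
    nlinarith [abs_nonneg cx, abs_nonneg cy]

lemma unstable_bracket : ∀ x ∈ unstable L, ∀ y ∈ unstable L, ⁅x, y⁆ ∈ unstable L := by
  refine bracket_mem_of_forall_gen ?_
  rintro x ⟨hx0, cx, hx, hcx⟩ y ⟨hy0, cy, hy, hcy⟩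
  by_cases hz : ⁅x, y⁆ = (0 : 𝔫)
  · rw [hz]; exact zero_mem _
  · refine mem_unstable L hz (map_lie_eig L hx hy) ?_
    rw [abs_mul]
    nlinarith [abs_nonneg cx, abs_nonneg cy]

lemma top_eq_sup (hL : HasRealEigenbasis L) (hhyp : IsHyperbolic L) :
    (⊤ : Submodule ℝ 𝔫) = stable L ⊔ unstable L := by
  obtain ⟨n, b, c, hbc⟩ := hL
  refine le_antisymm ?_ le_top
  rw [← b.span_eq]
  refine Submodule.span_le.2 ?_
  rintro x ⟨i, rfl⟩
  have hb0 : b i ≠ 0 := b.ne_zero i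
  rcases (hhyp (b i) (c i) hb0 (hbc i)).lt_or_gt with h | h
  · exact Submodule.mem_sup_left (mem_stable L hb0 (hbc i) h)
  · exact Submodule.mem_sup_right (mem_unstable L hb0 (hbc i) h)

lemma disjoint_stable_unstable (hL : HasRealEigenbasis L) :
    Disjoint (stable L) (unstable L) := by
  classical
  obtain ⟨n, b, c, hbc⟩ := hL
  set P : 𝔫 →ₗ[ℝ] 𝔫 := b.constr ℝ (fun i => if |c i| < 1 then b i else (0 : 𝔫)) with hP
  have coeff : ∀ (v : 𝔫) (cv : ℝ), L v = cv • v → ∀ i, b.repr v i ≠ 0 → c i = cv := by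
    intro v cv hv i hi
    have hsum : L v = ∑ j, (c j * b.repr v j) • b j := by
      have : L.toLinearEquiv v = ∑ j, (c j * b.repr v j) • b j := by
        conv_lhs => rw [← b.sum_repr v]
        rw [map_sum]
        refine Finset.sum_congr rfl fun j _ => ?_
        rw [map_smul]
        have hbj : L.toLinearEquiv (b j) = c j • b j := hbc j
        rw [hbj, smul_smul, mul_comm]
      exact this
    have h1 : b.repr (L v) i = cv * b.repr v i := by
      rw [hv, map_smul]; simp
    have h2 : b.repr (L v) i = c i * b.repr v i := by
      rw [hsum, map_sum]
      simp [Finsupp.single_apply]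
    exact mul_right_cancel₀ hi (h2.symm.trans h1)
  have hPs : ∀ v ∈ stable L, P v = v := by
    have : stable L ≤ LinearMap.ker (P - LinearMap.id) := by
      refine Submodule.span_le.2 ?_
      rintro v ⟨hv0, cv, hv, hcv⟩
      rw [SetLike.mem_coe, LinearMap.mem_ker, LinearMap.sub_apply, LinearMap.id_apply,
        sub_eq_zero]
      conv_lhs => rw [← b.sum_repr v]
      conv_rhs => rw [← b.sum_repr v]
      rw [map_sum]
      refine Finset.sum_congr rfl fun i _ => ?_
      rw [map_smul, hP, Module.Basis.constr_basis]
      by_cases hi : b.repr v i = 0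
      · rw [hi, zero_smul, zero_smul]
      · rw [if_pos (by rw [coeff v cv hv i hi]; exact hcv)]
    intro v hv
    have := this hv
    rw [LinearMap.mem_ker, LinearMap.sub_apply, LinearMap.id_apply, sub_eq_zero] at this
    exact this
  have hPu : ∀ v ∈ unstable L, P v = 0 := by
    have : unstable L ≤ LinearMap.ker P := by
      refine Submodule.span_le.2 ?_
      rintro v ⟨hv0, cv, hv, hcv⟩
      rw [SetLike.mem_coe, LinearMap.mem_ker]
      conv_lhs => rw [← b.sum_repr v]
      rw [map_sum]
      refine Finset.sum_eq_zero fun i _ => ?_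
      rw [map_smul, hP, Module.Basis.constr_basis]
      by_cases hi : b.repr v i = 0
      · rw [hi, zero_smul]
      · rw [if_neg (by rw [coeff v cv hv i hi]; exact not_lt.2 (le_of_lt hcv)), smul_zero]
    intro v hv
    exact LinearMap.mem_ker.1 (this hv)
  rw [Submodule.disjoint_def]
  intro x hxs hxu
  have h1 := hPs x hxs
  have h2 := hPu x hxu
  rw [h2] at h1
  exact h1.symm

end AuxL
section AuxKey

variable {𝔫 : Type*} [LieRing 𝔫] [LieAlgebra ℝ 𝔫] [LieRing.IsNilpotent 𝔫]
  (L : 𝔫 ≃ₗ⁅ℝ⁆ 𝔫)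

lemma eig_bracket_zero (hhyp : IsHyperbolic L) (hsort : SortedSpectrum L)
    {v w : 𝔫} {cv cw : ℝ} (hv0 : v ≠ 0) (hv : L v = cv • v) (hcv : |cv| < 1)
    (hw0 : w ≠ 0) (hw : L w = cw • w) (hcw : 1 < |cw|) : ⁅v, w⁆ = 0 := by
  by_contra hz
  have hcv0 : cv ≠ 0 := eig_ne_zero L hv0 hv
  have hcw0 : cw ≠ 0 := eig_ne_zero L hw0 hw
  have hLz : L ⁅v, w⁆ = (cv * cw) • ⁅v, w⁆ := map_lie_eig L hv hw
  obtain ⟨jv, hjv1, hjv2⟩ := exists_degree hv0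
  obtain ⟨jw, hjw1, hjw2⟩ := exists_degree hw0
  obtain ⟨jz, hjz1, hjz2⟩ := exists_degree hz
  -- ⁅v, w⁆ sits deeper than both jv and jw
  have hz_w : ⁅v, w⁆ ∈ lcsOf (⊤ : Submodule ℝ 𝔫) (jw + 1) := by
    rw [lcsOf_succ]
    exact bracket_mem_bracketSpan Submodule.mem_top hjw1
  have hz_v : ⁅v, w⁆ ∈ lcsOf (⊤ : Submodule ℝ 𝔫) (jv + 1) := by
    have h1 : ⁅w, v⁆ ∈ lcsOf (⊤ : Submodule ℝ 𝔫) (jv + 1) := by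
      rw [lcsOf_succ]
      exact bracket_mem_bracketSpan Submodule.mem_top hjv1
    have h2 := neg_mem h1
    rwa [← lie_skew, neg_neg] at h2
  have hjzw : jw + 1 ≤ jz := by
    by_contra h
    exact hjz2 (lcsOf_top_antitone_s5 (by omega : jz + 1 ≤ jw + 1) hz_w)
  have hjzv : jv + 1 ≤ jz := by
    by_contra h
    exact hjz2 (lcsOf_top_antitone_s5 (by omega : jz + 1 ≤ jv + 1) hz_v)
  have hne : |cv * cw| ≠ 1 := hhyp ⁅v, w⁆ (cv * cw) hz hLz
  have habsv : 0 < |cv| := abs_pos.2 hcv0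
  have habsw : 0 < |cw| := abs_pos.2 hcw0
  rcases hne.lt_or_gt with hlt | hgt
  · -- stable case : use L.symm
    have hvs : L.symm v = cv⁻¹ • v := symm_eig L hv0 hv
    have hzs : L.symm ⁅v, w⁆ = (cv * cw)⁻¹ • ⁅v, w⁆ := symm_eig L hz hLz
    have hgr_v : v ∈ grading L.symm ⊤ (jv + 1) :=
      Submodule.subset_span ⟨⟨hv0, cv⁻¹, hvs⟩, hjv1, hjv2⟩
    have hgr_z : ⁅v, w⁆ ∈ grading L.symm ⊤ (jz + 1) :=
      Submodule.subset_span ⟨⟨hz, (cv * cw)⁻¹, hzs⟩, hjz1, hjz2⟩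
    have h1 : 1 < |cv⁻¹| := by
      rw [abs_inv]
      exact (one_lt_inv₀ habsv).2 hcv
    have h2 : 1 < |(cv * cw)⁻¹| := by
      rw [abs_inv]
      exact (one_lt_inv₀ (abs_pos.2 (mul_ne_zero hcv0 hcw0))).2 hlt
    have := hsort.2 (jv + 1) (jz + 1) (by omega) v ⁅v, w⁆ cv⁻¹ (cv * cw)⁻¹
      hv0 hvs h1 hgr_v hz hzs h2 hgr_z
    rw [abs_inv, abs_inv, abs_mul, mul_inv] at this
    have hwinv : |cw|⁻¹ < 1 := (inv_lt_one₀ habsw).2 hcw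
    nlinarith [inv_pos.2 habsv]
  · -- unstable case
    have hgr_w : w ∈ grading L ⊤ (jw + 1) :=
      Submodule.subset_span ⟨⟨hw0, cw, hw⟩, hjw1, hjw2⟩
    have hgr_z : ⁅v, w⁆ ∈ grading L ⊤ (jz + 1) :=
      Submodule.subset_span ⟨⟨hz, cv * cw, hLz⟩, hjz1, hjz2⟩
    have := hsort.1 (jw + 1) (jz + 1) (by omega) w ⁅v, w⁆ cw (cv * cw)
      hw0 hw hcw hgr_w hz hLz hgt hgr_z
    rw [abs_mul] at this
    nlinarith

end AuxKey
section AuxSplit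

variable {𝔫 : Type*} [LieRing 𝔫] [LieAlgebra ℝ 𝔫] [LieRing.IsNilpotent 𝔫]
  (L : 𝔫 ≃ₗ⁅ℝ⁆ 𝔫)

omit [LieRing.IsNilpotent 𝔫] in
lemma bracketSpan_sup_sup (A B C D : Submodule ℝ 𝔫) :
    bracketSpan (A ⊔ B) (C ⊔ D) ≤
      (bracketSpan A C ⊔ bracketSpan A D) ⊔ (bracketSpan B C ⊔ bracketSpan B D) := by
  refine bracketSpan_le fun x hx y hy => ?_
  obtain ⟨a, ha, b', hb', rfl⟩ := Submodule.mem_sup.1 hx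
  obtain ⟨c', hc', d, hd, rfl⟩ := Submodule.mem_sup.1 hy
  rw [add_lie, lie_add, lie_add]
  refine add_mem (add_mem ?_ ?_) (add_mem ?_ ?_)
  · exact Submodule.mem_sup_left (Submodule.mem_sup_left (bracket_mem_bracketSpan ha hc'))
  · exact Submodule.mem_sup_left (Submodule.mem_sup_right (bracket_mem_bracketSpan ha hd))
  · exact Submodule.mem_sup_right (Submodule.mem_sup_left (bracket_mem_bracketSpan hb' hc'))
  · exact Submodule.mem_sup_right (Submodule.mem_sup_right (bracket_mem_bracketSpan hb' hd))

lemma stable_unstable_zero (hhyp : IsHyperbolic L) (hsort : SortedSpectrum L) :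
    ∀ x ∈ stable L, ∀ y ∈ unstable L, ⁅x, y⁆ = 0 := by
  intro x hx y hy
  have h : ∀ x ∈ stable L, ∀ y ∈ unstable L, ⁅x, y⁆ ∈ (⊥ : Submodule ℝ 𝔫) := by
    refine bracket_mem_of_forall_gen ?_
    rintro v ⟨hv0, cv, hv, hcv⟩ w ⟨hw0, cw, hw, hcw⟩
    rw [Submodule.mem_bot]
    exact eig_bracket_zero L hhyp hsort hv0 hv hcv hw0 hw hcw
  exact Submodule.mem_bot ℝ |>.1 (h x hx y hy)

lemma unstable_stable_zero (hhyp : IsHyperbolic L) (hsort : SortedSpectrum L) :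
    ∀ x ∈ unstable L, ∀ y ∈ stable L, ⁅x, y⁆ = 0 := by
  intro x hx y hy
  have := stable_unstable_zero L hhyp hsort y hy x hx
  rw [← lie_skew, this, neg_zero]

lemma lcs_split (hL : HasRealEigenbasis L) (hhyp : IsHyperbolic L)
    (hsort : SortedSpectrum L) :
    ∀ i, lcsOf (⊤ : Submodule ℝ 𝔫) i = lcsOf (stable L) i ⊔ lcsOf (unstable L) i := by
  intro i
  induction i with
  | zero =>
    rw [lcsOf_zero, lcsOf_zero, lcsOf_zero]
    exact top_eq_sup L hL hhyp
  | succ i ih =>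
    apply le_antisymm
    · rw [lcsOf_succ, ih, top_eq_sup L hL hhyp]
      refine le_trans (bracketSpan_sup_sup _ _ _ _) ?_
      refine sup_le (sup_le ?_ ?_) (sup_le ?_ ?_)
      · exact le_sup_left
      · refine le_trans (bracketSpan_le fun x hx y hy => ?_) (bot_le :
          (⊥ : Submodule ℝ 𝔫) ≤ _)
        rw [Submodule.mem_bot]
        exact stable_unstable_zero L hhyp hsort x hx y
          (lcsOf_le_self (unstable_bracket L) i hy)
      · refine le_trans (bracketSpan_le fun x hx y hy => ?_) (bot_le :
          (⊥ : Submodule ℝ 𝔫) ≤ _)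
        rw [Submodule.mem_bot]
        exact unstable_stable_zero L hhyp hsort x hx y
          (lcsOf_le_self (stable_bracket L) i hy)
      · exact le_sup_right
    · exact sup_le (lcsOf_mono le_top (i + 1)) (lcsOf_mono le_top (i + 1))

lemma lcs_inf_unstable (hL : HasRealEigenbasis L) (hhyp : IsHyperbolic L)
    (hsort : SortedSpectrum L) (i : ℕ) :
    lcsOf (unstable L) i = lcsOf (⊤ : Submodule ℝ 𝔫) i ⊓ unstable L := by
  apply le_antisymm
  · exact le_inf (lcsOf_mono le_top i) (lcsOf_le_self (unstable_bracket L) i)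
  · intro x hx
    obtain ⟨hx1, hx2⟩ := Submodule.mem_inf.1 hx
    rw [lcs_split L hL hhyp hsort i] at hx1
    obtain ⟨a, ha, u, hu, rfl⟩ := Submodule.mem_sup.1 hx1
    have haS : a ∈ stable L := lcsOf_le_self (stable_bracket L) i ha
    have haU : a ∈ unstable L := by
      have : a = (a + u) - u := by abel
      rw [this]
      exact sub_mem hx2 (lcsOf_le_self (unstable_bracket L) i hu)
    have ha0 : a = 0 :=
      Submodule.disjoint_def.1 (disjoint_stable_unstable L hL) a haS haU
    rw [ha0, zero_add]
    exact hu

lemma lcs_inf_stable (hL : HasRealEigenbasis L) (hhyp : IsHyperbolic L)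
    (hsort : SortedSpectrum L) (i : ℕ) :
    lcsOf (stable L) i = lcsOf (⊤ : Submodule ℝ 𝔫) i ⊓ stable L := by
  apply le_antisymm
  · exact le_inf (lcsOf_mono le_top i) (lcsOf_le_self (stable_bracket L) i)
  · intro x hx
    obtain ⟨hx1, hx2⟩ := Submodule.mem_inf.1 hx
    rw [lcs_split L hL hhyp hsort i] at hx1
    obtain ⟨a, ha, u, hu, rfl⟩ := Submodule.mem_sup.1 hx1
    have huU : u ∈ unstable L := lcsOf_le_self (unstable_bracket L) i hu
    have huS : u ∈ stable L := by
      have : u = (a + u) - a := by abel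
      rw [this]
      exact sub_mem hx2 (lcsOf_le_self (stable_bracket L) i ha)
    have hu0 : u = 0 :=
      Submodule.disjoint_def.1 (disjoint_stable_unstable L hL) u huS huU
    rw [hu0, add_zero]
    exact ha

end AuxSplit
section AuxGrading

variable {𝔫 : Type*} [LieRing 𝔫] [LieAlgebra ℝ 𝔫] [LieRing.IsNilpotent 𝔫]
  (L : 𝔫 ≃ₗ⁅ℝ⁆ 𝔫)

omit [LieRing.IsNilpotent 𝔫] in
lemma grading_zero (A : Submodule ℝ 𝔫) : grading L A 0 = ⊥ := rfl

omit [LieRing.IsNilpotent 𝔫] in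
lemma grading_succ (A : Submodule ℝ 𝔫) (i : ℕ) :
    grading L A (i + 1) = Submodule.span ℝ
      {v : 𝔫 | IsEigvec L v ∧ v ∈ lcsOf A i ∧ v ∉ lcsOf A (i + 1)} := rfl

lemma grading_unstable_eq (hL : HasRealEigenbasis L) (hhyp : IsHyperbolic L)
    (hsort : SortedSpectrum L) (i : ℕ) :
    grading L (unstable L) i = grading L ⊤ i ⊓ unstable L := by
  cases i with
  | zero => rw [grading_zero, grading_zero, bot_inf_eq]
  | succ i =>
    apply le_antisymm
    · rw [grading_succ, grading_succ]
      refine le_inf (Submodule.span_le.2 ?_) (Submodule.span_le.2 ?_)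
      · rintro v ⟨hev, h1, h2⟩
        refine Submodule.subset_span ⟨hev, lcsOf_mono le_top i h1, fun hc => h2 ?_⟩
        rw [lcs_inf_unstable L hL hhyp hsort (i + 1)]
        exact Submodule.mem_inf.2 ⟨hc, lcsOf_le_self (unstable_bracket L) i h1⟩
      · rintro v ⟨hev, h1, h2⟩
        exact lcsOf_le_self (unstable_bracket L) i h1
    · intro x hx
      obtain ⟨hx1, hx2⟩ := Submodule.mem_inf.1 hx
      rw [grading_succ] at hx1
      have hle : Submodule.span ℝ
          {v : 𝔫 | IsEigvec L v ∧ v ∈ lcsOf (⊤ : Submodule ℝ 𝔫) i ∧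
            v ∉ lcsOf (⊤ : Submodule ℝ 𝔫) (i + 1)} ≤
          stable L ⊔ grading L (unstable L) (i + 1) := by
        refine Submodule.span_le.2 ?_
        rintro v ⟨⟨hv0, cv, hv⟩, h1, h2⟩
        rcases (hhyp v cv hv0 hv).lt_or_gt with hc | hc
        · exact Submodule.mem_sup_left (mem_stable L hv0 hv hc)
        · refine Submodule.mem_sup_right ?_
          rw [grading_succ]
          refine Submodule.subset_span ⟨⟨hv0, cv, hv⟩, ?_, ?_⟩
          · rw [lcs_inf_unstable L hL hhyp hsort i]
            exact Submodule.mem_inf.2 ⟨h1, mem_unstable L hv0 hv hc⟩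
          · exact fun hcon => h2 (lcsOf_mono le_top (i + 1) hcon)
      obtain ⟨a, ha, u, hu, rfl⟩ := Submodule.mem_sup.1 (hle hx1)
      have hu_un : u ∈ unstable L := by
        have hgr : grading L (unstable L) (i + 1) ≤ unstable L := by
          rw [grading_succ]
          refine Submodule.span_le.2 ?_
          rintro v ⟨hev, h1, _⟩
          exact lcsOf_le_self (unstable_bracket L) i h1
        exact hgr hu
      have haU : a ∈ unstable L := by
        have h : a = (a + u) - u := by abel
        rw [h]
        exact sub_mem hx2 hu_un
      have ha0 : a = 0 :=
        Submodule.disjoint_def.1 (disjoint_stable_unstable L hL) a ha haU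
      rw [ha0, zero_add]
      exact hu

lemma grading_stable_eq (hL : HasRealEigenbasis L) (hhyp : IsHyperbolic L)
    (hsort : SortedSpectrum L) (i : ℕ) :
    grading L (stable L) i = grading L ⊤ i ⊓ stable L := by
  cases i with
  | zero => rw [grading_zero, grading_zero, bot_inf_eq]
  | succ i =>
    apply le_antisymm
    · rw [grading_succ, grading_succ]
      refine le_inf (Submodule.span_le.2 ?_) (Submodule.span_le.2 ?_)
      · rintro v ⟨hev, h1, h2⟩
        refine Submodule.subset_span ⟨hev, lcsOf_mono le_top i h1, fun hc => h2 ?_⟩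
        rw [lcs_inf_stable L hL hhyp hsort (i + 1)]
        exact Submodule.mem_inf.2 ⟨hc, lcsOf_le_self (stable_bracket L) i h1⟩
      · rintro v ⟨hev, h1, h2⟩
        exact lcsOf_le_self (stable_bracket L) i h1
    · intro x hx
      obtain ⟨hx1, hx2⟩ := Submodule.mem_inf.1 hx
      rw [grading_succ] at hx1
      have hle : Submodule.span ℝ
          {v : 𝔫 | IsEigvec L v ∧ v ∈ lcsOf (⊤ : Submodule ℝ 𝔫) i ∧
            v ∉ lcsOf (⊤ : Submodule ℝ 𝔫) (i + 1)} ≤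
          unstable L ⊔ grading L (stable L) (i + 1) := by
        refine Submodule.span_le.2 ?_
        rintro v ⟨⟨hv0, cv, hv⟩, h1, h2⟩
        rcases (hhyp v cv hv0 hv).lt_or_gt with hc | hc
        · refine Submodule.mem_sup_right ?_
          rw [grading_succ]
          refine Submodule.subset_span ⟨⟨hv0, cv, hv⟩, ?_, ?_⟩
          · rw [lcs_inf_stable L hL hhyp hsort i]
            exact Submodule.mem_inf.2 ⟨h1, mem_stable L hv0 hv hc⟩
          · exact fun hcon => h2 (lcsOf_mono le_top (i + 1) hcon)
        · exact Submodule.mem_sup_left (mem_unstable L hv0 hv hc)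
      obtain ⟨a, ha, u, hu, rfl⟩ := Submodule.mem_sup.1 (hle hx1)
      have hu_st : u ∈ stable L := by
        have hgr : grading L (stable L) (i + 1) ≤ stable L := by
          rw [grading_succ]
          refine Submodule.span_le.2 ?_
          rintro v ⟨hev, h1, _⟩
          exact lcsOf_le_self (stable_bracket L) i h1
        exact hgr hu
      have haS : a ∈ stable L := by
        have h : a = (a + u) - u := by abel
        rw [h]
        exact sub_mem hx2 hu_st
      have ha0 : a = 0 :=
        Submodule.disjoint_def.1 (disjoint_stable_unstable L hL) a haS ha
      rw [ha0, zero_add]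
      exact hu

end AuxGrading
/-- for a hyperbolic automorphism with real eigenbasis and sorted spectrum, the
lower central series splits, `𝔫^i = (𝔫^s)^i ⊕ (𝔫^u)^i` for every `i ≥ 1`, and the graded
pieces satisfy `𝔫^u_(i) = 𝔫_(i) ∩ 𝔫^u` and `𝔫^s_(i) = 𝔫_(i) ∩ 𝔫^s`.
(Recall `lcsOf A (i-1)` is the paper's `A^i` and `grading L A i` is the grading of `A` induced
by the restriction of `L`.) -/
theorem lowerCentralSeries_splits_of_sorted
    {𝔫 : Type*} [LieRing 𝔫] [LieAlgebra ℝ 𝔫] [FiniteDimensional ℝ 𝔫]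
    [LieRing.IsNilpotent 𝔫]
    (L : 𝔫 ≃ₗ⁅ℝ⁆ 𝔫) (hL : HasRealEigenbasis L)
    (hhyp : IsHyperbolic L) (hsort : SortedSpectrum L) :
    (∀ i : ℕ, 1 ≤ i →
      lcsOf (⊤ : Submodule ℝ 𝔫) (i - 1) = lcsOf (stable L) (i - 1) ⊔ lcsOf (unstable L) (i - 1)
        ∧ Disjoint (lcsOf (stable L) (i - 1)) (lcsOf (unstable L) (i - 1))) ∧
    (∀ i : ℕ, grading L (unstable L) i = grading L ⊤ i ⊓ unstable L) ∧
    (∀ i : ℕ, grading L (stable L) i = grading L ⊤ i ⊓ stable L) := by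

  refine ⟨?_, fun i => grading_unstable_eq L hL hhyp hsort i,
    fun i => grading_stable_eq L hL hhyp hsort i⟩
  intro i _
  exact ⟨lcs_split L hL hhyp hsort (i - 1),
    (disjoint_stable_unstable L hL).mono
      (lcsOf_le_self (stable_bracket L) (i - 1))
      (lcsOf_le_self (unstable_bracket L) (i - 1))⟩
end

section
/- Let 𝔫 be a finite-dimensional real nilpotent Lie algebra and L : 𝔫 → 𝔫 an expanding Lie algebra automorphism admitting a real eigenbasis and with simple spectrum. Let v be an eigenvector of L whose eigenvalue λ₁ has the smallest modulus among all eigenvalues of L. Then for every eigenvector w of L that is linearly independent from v, if w ∈ 𝔫_(i) and λ_w is the eigenvalue of w, then the escape speed satisfies σ_w = |λ_w|^{1/i} > |λ₁| = σ_v. -/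
section Aux
variable {𝔫 : Type*} [LieRing 𝔫] [LieAlgebra ℝ 𝔫]
variable (L : 𝔫 ≃ₗ⁅ℝ⁆ 𝔫) {n : ℕ} (b : Module.Basis (Fin n) ℝ 𝔫) {c : Fin n → ℝ}

lemma aux_reprL (hb : ∀ i, L (b i) = c i • b i) (u : 𝔫) (j : Fin n) :
    b.repr (L u) j = c j * b.repr u j := by
  have hcoe : ∀ z : 𝔫, (L : 𝔫 →ₗ⁅ℝ⁆ 𝔫).toLinearMap z = L z := fun _ => rfl
  have h : (b.coord j).comp (L : 𝔫 →ₗ⁅ℝ⁆ 𝔫).toLinearMap = c j • b.coord j := by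
    apply b.ext
    intro i
    simp only [LinearMap.comp_apply, hcoe, LinearMap.smul_apply, Module.Basis.coord_apply,
      hb i, map_smul, Finsupp.smul_apply, Module.Basis.repr_self, smul_eq_mul]
    rcases eq_or_ne i j with rfl | hij
    · simp
    · simp [Finsupp.single_apply, hij]
  have := LinearMap.congr_fun h u
  simpa [hcoe, Module.Basis.coord_apply] using this

lemma aux_component_mem (hb : ∀ i, L (b i) = c i • b i) (hc : Function.Injective c)
    (W : Submodule ℝ 𝔫) (hW : ∀ u ∈ W, L u ∈ W) {y : 𝔫} (hy : y ∈ W) (q : Fin n) :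
    b.repr y q • b q ∈ W := by
  classical
  rcases eq_or_ne (b.repr y q) 0 with h0 | h0
  · simp [h0, W.zero_mem]
  set G : Fin n → 𝔫 → 𝔫 := fun r z => L z - c r • z with hG
  set A : List (Fin n) → 𝔫 → 𝔫 := fun l u => l.foldr G u with hA
  have hmemA : ∀ (l : List (Fin n)) (u : 𝔫), u ∈ W → A l u ∈ W := by
    intro l
    induction l with
    | nil => intro u hu; simpa [hA] using hu
    | cons a l ih =>
        intro u hu
        have h1 : A l u ∈ W := ih u hu
        show G a (A l u) ∈ W
        exact W.sub_mem (hW _ h1) (W.smul_mem _ h1)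
  have hreprA : ∀ (l : List (Fin n)) (u : 𝔫) (p : Fin n),
      b.repr (A l u) p = (l.map (fun r => c p - c r)).prod * b.repr u p := by
    intro l
    induction l with
    | nil => intro u p; simp [hA]
    | cons a l ih =>
        intro u p
        show b.repr (G a (A l u)) p = _
        rw [hG]
        simp only [map_sub, map_smul, Finsupp.sub_apply, Finsupp.smul_apply, smul_eq_mul,
          List.map_cons, List.prod_cons]
        rw [aux_reprL L b hb, ih]
        ring
  set s : Finset (Fin n) := (b.repr y).support.erase q with hs
  set l : List (Fin n) := s.toList with hl
  have hlmem : ∀ r, r ∈ l ↔ r ∈ s := fun r => Finset.mem_toList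
  set z : 𝔫 := A l y with hz
  have hzW : z ∈ W := hmemA l y hy
  set K : ℝ := (l.map (fun r => c q - c r)).prod with hK
  have hKne : K ≠ 0 := by
    rw [hK]
    intro h
    rcases List.prod_eq_zero_iff.1 h with h
    obtain ⟨r, hr, hr0⟩ := List.mem_map.1 h
    have hrq : r ≠ q := Finset.ne_of_mem_erase ((hlmem r).1 hr)
    exact hrq (hc (by linarith [sub_eq_zero.1 hr0]) ).symm
  have hzq : b.repr z q = K * b.repr y q := hreprA l y q
  have hzp : ∀ p, p ≠ q → b.repr z p = 0 := by
    intro p hp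
    rw [hz, hreprA l y p]
    by_cases hps : p ∈ (b.repr y).support
    · have hpl : p ∈ l := (hlmem p).2 (Finset.mem_erase.2 ⟨hp, hps⟩)
      have : (0:ℝ) ∈ l.map (fun r => c p - c r) :=
        List.mem_map.2 ⟨p, hpl, by ring⟩
      rw [List.prod_eq_zero this]
      ring
    · simp [Finsupp.notMem_support_iff.1 hps]
  have hzeq : z = (K * b.repr y q) • b q := by
    apply b.repr.injective
    ext p
    rcases eq_or_ne p q with rfl | hp
    · simp [hzq, Finsupp.single_apply]
    · simp [hzp p hp, Finsupp.single_apply, Ne.symm hp]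
  have heq : b.repr y q • b q = K⁻¹ • z := by
    rw [hzeq, smul_smul]
    field_simp
  rw [heq]
  exact W.smul_mem _ hzW

lemma aux_eig_structure (hb : ∀ i, L (b i) = c i • b i)
    (hinj : Function.Injective fun i => |c i|) {u : 𝔫} {lam : ℝ}
    (hu : u ≠ 0) (hLu : L u = lam • u) :
    ∃ j, c j = lam ∧ b.repr u j ≠ 0 ∧ u = b.repr u j • b j := by
  have key : ∀ p, c p * b.repr u p = lam * b.repr u p := by
    intro p
    have h := aux_reprL L b hb u p
    rw [hLu] at h
    simpa [mul_comm] using h.symm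
  have hne : b.repr u ≠ 0 := fun h => hu (by simpa using b.repr.map_eq_zero_iff.1 h)
  obtain ⟨j, hj⟩ := Finsupp.ne_iff.1 hne
  simp only [Finsupp.coe_zero, Pi.zero_apply] at hj
  have hcj : c j = lam := mul_right_cancel₀ hj (key j)
  refine ⟨j, hcj, hj, ?_⟩
  apply b.repr.injective
  ext p
  rcases eq_or_ne p j with rfl | hp
  · simp [Finsupp.single_apply]
  · have h0 : b.repr u p = 0 := by
      by_contra h
      have hcp : c p = lam := mul_right_cancel₀ h (key p)
      exact hp (hinj (by simp [hcp, hcj]))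
    simp [h0, Finsupp.single_apply, Ne.symm hp]

lemma aux_lcs_invariant : ∀ k, ∀ u ∈ lcsOf (⊤ : Submodule ℝ 𝔫) k, L u ∈ lcsOf ⊤ k := by
  intro k
  induction k with
  | zero => intro u _; trivial
  | succ k ih =>
      intro u hu
      have hrw : lcsOf (⊤ : Submodule ℝ 𝔫) (k+1)
          = Submodule.span ℝ {z : 𝔫 | ∃ x ∈ (⊤ : Submodule ℝ 𝔫), ∃ y ∈ lcsOf ⊤ k, z = ⁅x, y⁆} := rfl
      have hLie : ∀ x y : 𝔫, L ⁅x, y⁆ = ⁅L x, L y⁆ := fun x y =>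
        (L : 𝔫 →ₗ⁅ℝ⁆ 𝔫).map_lie x y
      have hadd : ∀ x y : 𝔫, L (x + y) = L x + L y := fun x y =>
        (L : 𝔫 →ₗ⁅ℝ⁆ 𝔫).toLinearMap.map_add x y
      have hsmul : ∀ (a : ℝ) (x : 𝔫), L (a • x) = a • L x := fun a x =>
        (L : 𝔫 →ₗ⁅ℝ⁆ 𝔫).toLinearMap.map_smul a x
      have hzero : L (0 : 𝔫) = 0 := (L : 𝔫 →ₗ⁅ℝ⁆ 𝔫).toLinearMap.map_zero
      rw [hrw] at hu ⊢
      induction hu using Submodule.span_induction with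
      | mem z hzS =>
          obtain ⟨x, -, y, hy, rfl⟩ := hzS
          exact Submodule.subset_span ⟨L x, trivial, L y, ih y hy, hLie x y⟩
      | zero => rw [hzero]; simp
      | add x y _ _ hx hy => rw [hadd]; exact Submodule.add_mem _ hx hy
      | smul a x _ hx => rw [hsmul]; exact Submodule.smul_mem _ a hx



lemma aux_step1 (hb : ∀ i, L (b i) = c i • b i) (hc : Function.Injective c)
    (k : ℕ) (j : Fin n) (hj : b j ∈ lcsOf (⊤ : Submodule ℝ 𝔫) (k+1)) :
    ∃ p q : Fin n, b q ∈ lcsOf (⊤ : Submodule ℝ 𝔫) k ∧ c j = c p * c q ∧ ⁅b p, b q⁆ ≠ 0 := by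
  classical
  have hrw : lcsOf (⊤ : Submodule ℝ 𝔫) (k+1)
      = Submodule.span ℝ {z : 𝔫 | ∃ x ∈ (⊤ : Submodule ℝ 𝔫), ∃ y ∈ lcsOf ⊤ k, z = ⁅x, y⁆} := rfl
  rw [hrw] at hj
  -- find x, y with nonzero j-coordinate of the bracket
  have hxy : ∃ x y : 𝔫, y ∈ lcsOf (⊤ : Submodule ℝ 𝔫) k ∧ b.repr ⁅x, y⁆ j ≠ 0 := by
    by_contra hcon
    push_neg at hcon
    have hle : Submodule.span ℝ {z : 𝔫 | ∃ x ∈ (⊤ : Submodule ℝ 𝔫), ∃ y ∈ lcsOf ⊤ k, z = ⁅x, y⁆}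
        ≤ LinearMap.ker (b.coord j) := by
      apply Submodule.span_le.2
      rintro z ⟨x, -, y, hy, rfl⟩
      simpa [Module.Basis.coord_apply] using hcon x y hy
    have := hle hj
    simp [Module.Basis.coord_apply] at this
  obtain ⟨x, y, hy, hxyne⟩ := hxy
  -- linear map z ↦ b.repr ⁅z, y⁆ j
  set g : 𝔫 →ₗ[ℝ] ℝ :=
    { toFun := fun z => b.repr ⁅z, y⁆ j
      map_add' := by intro a b'; simp [add_lie]
      map_smul' := by intro a z; simp [smul_lie] } with hg
  have hgx : g x ≠ 0 := hxyne
  have hp : ∃ p : Fin n, b.repr ⁅b p, y⁆ j ≠ 0 := by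
    by_contra hcon
    push_neg at hcon
    have : g = 0 := b.ext fun i => by simpa [hg] using hcon i
    rw [this] at hgx
    simp at hgx
  obtain ⟨p, hpne⟩ := hp
  -- linear map z ↦ b.repr ⁅b p, z⁆ j
  set h : 𝔫 →ₗ[ℝ] ℝ :=
    { toFun := fun z => b.repr ⁅b p, z⁆ j
      map_add' := by intro a b'; simp [lie_add]
      map_smul' := by intro a z; simp [lie_smul] } with hh
  have hhy : h y ≠ 0 := hpne
  have hq : ∃ q : Fin n, b.repr y q ≠ 0 ∧ b.repr ⁅b p, b q⁆ j ≠ 0 := by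
    have hy' : y = Finsupp.linearCombination ℝ ⇑b (b.repr y) := (b.linearCombination_repr y).symm
    rw [hy', Finsupp.linearCombination_apply, map_finsuppSum] at hhy
    obtain ⟨q, hqs, hq0⟩ := Finset.exists_ne_zero_of_sum_ne_zero hhy
    refine ⟨q, Finsupp.mem_support_iff.1 hqs, ?_⟩
    simp only [map_smul, smul_eq_mul] at hq0
    exact fun h0 => hq0 (by simp [hh, h0])
  obtain ⟨q, hqy, hqne⟩ := hq
  have hbq : b q ∈ lcsOf (⊤ : Submodule ℝ 𝔫) k := by
    have hWinv := aux_lcs_invariant L (𝔫 := 𝔫)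
    have hmem := aux_component_mem L b hb hc (lcsOf ⊤ k) (hWinv k) hy q
    have : b q = (b.repr y q)⁻¹ • (b.repr y q • b q) := by
      rw [smul_smul, inv_mul_cancel₀ hqy, one_smul]
    rw [this]
    exact Submodule.smul_mem _ _ hmem
  have hzne : ⁅b p, b q⁆ ≠ 0 := fun h0 => hqne (by simp [h0])
  have hLz : L ⁅b p, b q⁆ = (c p * c q) • ⁅b p, b q⁆ := by
    have := (L : 𝔫 →ₗ⁅ℝ⁆ 𝔫).map_lie (b p) (b q)
    have hL : L ⁅b p, b q⁆ = ⁅L (b p), L (b q)⁆ := this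
    rw [hL, hb p, hb q, smul_lie, lie_smul, smul_smul]
  have hcj : c j = c p * c q := by
    have h1 := aux_reprL L b hb ⁅b p, b q⁆ j
    rw [hLz] at h1
    simp only [map_smul, Finsupp.smul_apply, smul_eq_mul] at h1
    exact mul_right_cancel₀ hqne h1.symm
  exact ⟨p, q, hbq, hcj, hzne⟩

end Aux

section Bound
variable {𝔫 : Type*} [LieRing 𝔫] [LieAlgebra ℝ 𝔫]
variable (L : 𝔫 ≃ₗ⁅ℝ⁆ 𝔫) {n : ℕ} (b : Module.Basis (Fin n) ℝ 𝔫) {c : Fin n → ℝ}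

lemma aux_eig_bound (hb : ∀ i, L (b i) = c i • b i)
    (hsimple : Function.Injective fun i => |c i|)
    {lam₁ : ℝ} (h1 : 1 < |lam₁|)
    (hminb : ∀ p : Fin n, |lam₁| ≤ |c p|) :
    ∀ k (j : Fin n), b j ∈ lcsOf (⊤ : Submodule ℝ 𝔫) (k+1) → |lam₁| ^ (k+2) < |c j| := by
  have hc : Function.Injective c := fun p q h => hsimple (by simp [h])
  have hpos : (0:ℝ) < |lam₁| := lt_trans one_pos h1
  intro k
  induction k with
  | zero =>
      intro j hj
      obtain ⟨p, q, -, hcj, hzne⟩ := aux_step1 L b hb hc 0 j hj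
      have hpq : p ≠ q := fun h => hzne (by rw [h]; exact lie_self _)
      have habs : |c p| ≠ |c q| := fun h => hpq (hsimple h)
      have h1p := hminb p
      have h2q := hminb q
      have : |lam₁| * |lam₁| < |c p| * |c q| := by
        rcases lt_or_eq_of_le h1p with h | h
        · have := h2q
          nlinarith
        · have hql : |lam₁| < |c q| := lt_of_le_of_ne h2q (fun hh => habs (h.symm.trans hh))
          nlinarith
      calc |lam₁| ^ (0+2) = |lam₁| * |lam₁| := by ring
        _ < |c p| * |c q| := this
        _ = |c j| := by rw [hcj, abs_mul]
  | succ k ih =>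
      intro j hj
      obtain ⟨p, q, hbq, hcj, -⟩ := aux_step1 L b hb hc (k+1) j hj
      have hq : |lam₁| ^ (k+2) < |c q| := ih q hbq
      have h1p := hminb p
      calc |lam₁| ^ (k+3) = |lam₁| * |lam₁| ^ (k+2) := by ring
        _ < |lam₁| * |c q| := by exact (mul_lt_mul_iff_right₀ hpos).2 hq
        _ ≤ |c p| * |c q| := by
            apply mul_le_mul_of_nonneg_right h1p (abs_nonneg _)
        _ = |c j| := by rw [hcj, abs_mul]

end Bound

/-- let `L` be an expanding automorphism with simple spectrum of a
finite-dimensional real nilpotent Lie algebra, given by a real eigenbasis `b` with eigenvalues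
`c`, whose moduli are pairwise distinct (simple spectrum) and all `> 1` (expanding). If `v` is
an eigenvector whose eigenvalue `λ₁` has the smallest modulus among all eigenvalues of `L`,
then every eigenvector `w` linearly independent from `v`, lying in `𝔫_(i)` with eigenvalue
`λ_w`, has escape speed `σ_w = |λ_w|^(1/i) > |λ₁| = σ_v`. -/
theorem escape_speed_of_independent_eigvec_gt
    {𝔫 : Type*} [LieRing 𝔫] [LieAlgebra ℝ 𝔫] [FiniteDimensional ℝ 𝔫]
    [LieRing.IsNilpotent 𝔫]
    (L : 𝔫 ≃ₗ⁅ℝ⁆ 𝔫)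
    (n : ℕ) (b : Module.Basis (Fin n) ℝ 𝔫) (c : Fin n → ℝ)
    (hb : ∀ i, L (b i) = c i • b i)
    (hexp : ∀ (u : 𝔫) (cu : ℝ), u ≠ 0 → L u = cu • u → 1 < |cu|)
    (hsimple : Function.Injective fun i => |c i|)
    (v : 𝔫) (lam₁ : ℝ) (hv : v ≠ 0) (hveig : L v = lam₁ • v)
    (hmin : ∀ (u : 𝔫) (cu : ℝ), u ≠ 0 → L u = cu • u → |lam₁| ≤ |cu|) :
    ∀ (w : 𝔫) (lamw : ℝ) (i : ℕ), 1 ≤ i →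
      w ≠ 0 → L w = lamw • w → LinearIndependent ℝ ![v, w] → w ∈ grading L ⊤ i →
      |lam₁| < |lamw| ^ ((1 : ℝ) / i) := by
  intro w lamw i hi hw0 hweig hind hwgr
  have hc : Function.Injective c := fun p q h => hsimple (by simp [h])
  have h1 : 1 < |lam₁| := hexp v lam₁ hv hveig
  have hpos : (0:ℝ) < |lam₁| := lt_trans one_pos h1
  have hminb : ∀ p : Fin n, |lam₁| ≤ |c p| := fun p => hmin (b p) (c p) (b.ne_zero p) (hb p)
  -- w lies in lcsOf ⊤ (i-1)
  obtain ⟨i', rfl⟩ : ∃ i', i = i' + 1 := ⟨i - 1, (Nat.succ_pred_eq_of_pos hi).symm⟩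
  have hgr : grading L (⊤ : Submodule ℝ 𝔫) (i'+1) = Submodule.span ℝ
      {u : 𝔫 | IsEigvec L u ∧ u ∈ lcsOf (⊤ : Submodule ℝ 𝔫) i' ∧ u ∉ lcsOf ⊤ (i' + 1)} := rfl
  rw [hgr] at hwgr
  have hwlcs : w ∈ lcsOf (⊤ : Submodule ℝ 𝔫) i' := by
    have : Submodule.span ℝ
        {u : 𝔫 | IsEigvec L u ∧ u ∈ lcsOf (⊤ : Submodule ℝ 𝔫) i' ∧ u ∉ lcsOf ⊤ (i' + 1)}
        ≤ lcsOf (⊤ : Submodule ℝ 𝔫) i' := Submodule.span_le.2 fun u hu => hu.2.1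
    exact this hwgr
  obtain ⟨j, hcj, hrj, hwj⟩ := aux_eig_structure L b hb hsimple hw0 hweig
  rw [hwj] at hwlcs
  have hbj : b j ∈ lcsOf (⊤ : Submodule ℝ 𝔫) i' := by
    have h2 := Submodule.smul_mem (lcsOf (⊤ : Submodule ℝ 𝔫) i') (b.repr w j)⁻¹ hwlcs
    rwa [smul_smul, inv_mul_cancel₀ hrj, one_smul] at h2
  have hlamw : |lamw| = |c j| := by rw [hcj]
  -- key inequality: |lam₁| ^ (i'+1) < |lamw|
  have hkey : |lam₁| ^ (i'+1) < |lamw| := by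
    rcases Nat.eq_zero_or_pos i' with rfl | hi'
    · -- i = 1 case, use linear independence
      obtain ⟨j₀, hcj₀, hrj₀, hvj₀⟩ := aux_eig_structure L b hb hsimple hv hveig
      set α := b.repr v j₀ with hα
      set β := b.repr w j with hβ
      have hne : |c j| ≠ |lam₁| := by
        intro h
        have hjj : j = j₀ := hsimple (show |c j| = |c j₀| by rw [h, hcj₀])
        subst hjj
        have hwv : (β * α⁻¹) • v = w := by
          rw [hvj₀, smul_smul, mul_assoc, inv_mul_cancel₀ hrj₀, mul_one]
          exact hwj.symm
        have htne : (β * α⁻¹) ≠ 0 := mul_ne_zero hrj (inv_ne_zero hrj₀)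
        have hcontra := (linearIndependent_fin2.1 hind).2 (β * α⁻¹)⁻¹
        simp only [Matrix.cons_val_one, Matrix.head_cons, Matrix.cons_val_zero] at hcontra
        apply hcontra
        rw [← hwv, smul_smul, inv_mul_cancel₀ htne, one_smul]
      have : |lam₁| < |c j| := lt_of_le_of_ne (hminb j) (Ne.symm hne)
      simpa [hlamw] using this
    · obtain ⟨k, rfl⟩ : ∃ k, i' = k + 1 := ⟨i' - 1, (Nat.succ_pred_eq_of_pos hi').symm⟩
      have := aux_eig_bound L b hb hsimple h1 hminb k j hbj
      rw [hlamw]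
      convert this using 2
  -- convert to rpow
  have hii : ((i' + 1 : ℕ) : ℝ) ≠ 0 := by positivity
  have hexpo : (0:ℝ) < 1 / ((i' + 1 : ℕ) : ℝ) := by positivity
  have hstep : (|lam₁| ^ (i'+1) : ℝ) ^ ((1:ℝ) / ((i' + 1 : ℕ) : ℝ)) <
      |lamw| ^ ((1:ℝ) / ((i' + 1 : ℕ) : ℝ)) :=
    Real.rpow_lt_rpow (by positivity) hkey hexpo
  have hleft : (|lam₁| ^ (i'+1) : ℝ) ^ ((1:ℝ) / ((i' + 1 : ℕ) : ℝ)) = |lam₁| := by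
    rw [← Real.rpow_natCast |lam₁| (i'+1), ← Real.rpow_mul (le_of_lt hpos)]
    rw [mul_one_div, div_self hii, Real.rpow_one]
  rw [hleft] at hstep
  exact hstep
end

section
/- Let X be a compact topological space, L : X → X a homeomorphism, φ : X → ℝ a continuous function, and λ_u, λ_w nonzero real numbers with |λ_u| > |λ_w|. Then the series ω(x) = −λ_u^{−1} Σ_{m ≥ 1} (λ_w/λ_u)^{m−1} φ(L^{−m}(x)) converges absolutely and uniformly on X, the resulting function ω : X → ℝ is continuous, and it satisfies φ(x) + λ_u·ω(L(x)) = λ_w·ω(x) for all x ∈ X. -/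
open Filter

/-- for a homeomorphism `L` of a compact space `X`, continuous `φ : X → ℝ`, and
nonzero reals `λ_u, λ_w` with `|λ_u| > |λ_w|`, the series
`ω(x) = -λ_u⁻¹ Σ_{m ≥ 1} (λ_w/λ_u)^{m-1} φ(L^{-m} x)` converges absolutely and uniformly,
`ω` is continuous, and `φ(x) + λ_u·ω(L x) = λ_w·ω(x)` for all `x`. -/
theorem cohomological_equation_backward_solution
    {X : Type*} [TopologicalSpace X] [CompactSpace X]
    (L : X ≃ₜ X)
    (φ : X → ℝ) (hφ : Continuous φ)
    (lamu lamw : ℝ) (hu : lamu ≠ 0) (hw : lamw ≠ 0) (hlt : |lamw| < |lamu|) :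
    (∀ x : X, Summable fun m : ℕ =>
      |(-lamu⁻¹) * (lamw / lamu) ^ m * φ ((⇑L.symm)^[m + 1] x)|) ∧
    Continuous (fun x : X =>
      ∑' m : ℕ, (-lamu⁻¹) * (lamw / lamu) ^ m * φ ((⇑L.symm)^[m + 1] x)) ∧
    TendstoUniformly
      (fun (N : ℕ) (x : X) =>
        ∑ m ∈ Finset.range N, (-lamu⁻¹) * (lamw / lamu) ^ m * φ ((⇑L.symm)^[m + 1] x))
      (fun x : X => ∑' m : ℕ, (-lamu⁻¹) * (lamw / lamu) ^ m * φ ((⇑L.symm)^[m + 1] x))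
      atTop ∧
    (∀ x : X,
      φ x + lamu * (∑' m : ℕ, (-lamu⁻¹) * (lamw / lamu) ^ m * φ ((⇑L.symm)^[m + 1] (L x)))
        = lamw * ∑' m : ℕ, (-lamu⁻¹) * (lamw / lamu) ^ m * φ ((⇑L.symm)^[m + 1] x)) := by
  set r : ℝ := lamw / lamu with hr
  have hrabs : |r| < 1 := by
    rw [hr, abs_div, div_lt_one (abs_pos.mpr hu)]
    exact hlt
  -- bound on φ
  obtain ⟨C, hC⟩ := (isCompact_range (hφ.norm)).bddAbove
  have hCb : ∀ y : X, |φ y| ≤ C := fun y => hC ⟨y, rfl⟩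
  have hC0 : ∀ y : X, ‖φ y‖ ≤ C := hCb
  -- the uniform bound sequence
  set u : ℕ → ℝ := fun m => |lamu|⁻¹ * |r| ^ m * C with hudef
  have husum : Summable u := by
    have : Summable fun m : ℕ => |r| ^ m := summable_geometric_of_lt_one (abs_nonneg r) hrabs
    simpa [hudef, mul_comm, mul_assoc] using (this.mul_left |lamu|⁻¹).mul_right C
  have hbound : ∀ (m : ℕ) (x : X),
      ‖(-lamu⁻¹) * r ^ m * φ ((⇑L.symm)^[m + 1] x)‖ ≤ u m := by
    intro m x
    have h1 : ‖(-lamu⁻¹) * r ^ m * φ ((⇑L.symm)^[m + 1] x)‖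
        = |lamu|⁻¹ * |r| ^ m * |φ ((⇑L.symm)^[m + 1] x)| := by
      simp [abs_mul, abs_pow, abs_inv]
    rw [h1, hudef]
    exact mul_le_mul_of_nonneg_left (hCb _) (by positivity)
  have hsum : ∀ x : X, Summable fun m : ℕ =>
      |(-lamu⁻¹) * r ^ m * φ ((⇑L.symm)^[m + 1] x)| := by
    intro x
    refine Summable.of_nonneg_of_le (fun m => abs_nonneg _) (fun m => hbound m x) husum
  have hcontf : ∀ m : ℕ, Continuous fun x : X =>
      (-lamu⁻¹) * r ^ m * φ ((⇑L.symm)^[m + 1] x) := by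
    intro m
    exact continuous_const.mul (hφ.comp (Continuous.iterate L.symm.continuous (m + 1)))
  refine ⟨hsum, ?_, ?_, ?_⟩
  · exact continuous_tsum hcontf husum hbound
  · exact tendstoUniformly_tsum_nat husum hbound
  · intro x
    have hsum' : ∀ y : X, Summable fun m : ℕ =>
        (-lamu⁻¹) * r ^ m * φ ((⇑L.symm)^[m + 1] y) := fun y =>
      (hsum y).of_abs
    -- summability of g m = -(r^m) φ(L.symm^[m] x)
    have hg : Summable fun m : ℕ => -(r ^ m * φ ((⇑L.symm)^[m] x)) := by
      apply Summable.of_abs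
      apply Summable.of_nonneg_of_le (fun m => abs_nonneg _)
        (fun m => ?_) ((summable_geometric_of_lt_one (abs_nonneg r) hrabs).mul_right C)
      calc |-(r ^ m * φ ((⇑L.symm)^[m] x))| = |r| ^ m * |φ ((⇑L.symm)^[m] x)| := by
            simp [abs_mul, abs_pow]
        _ ≤ |r| ^ m * C := mul_le_mul_of_nonneg_left (hCb _) (by positivity)
    have hshift : ∀ m : ℕ, (⇑L.symm)^[m + 1] (L x) = (⇑L.symm)^[m] x := by
      intro m
      rw [Function.iterate_succ_apply]
      simp
    have e1 : lamu * (∑' m : ℕ, (-lamu⁻¹) * r ^ m * φ ((⇑L.symm)^[m + 1] (L x)))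
        = ∑' m : ℕ, -(r ^ m * φ ((⇑L.symm)^[m] x)) := by
      rw [← tsum_mul_left]
      congr 1; funext m
      rw [hshift m]
      field_simp
    have e2 : lamw * ∑' m : ℕ, (-lamu⁻¹) * r ^ m * φ ((⇑L.symm)^[m + 1] x)
        = ∑' m : ℕ, -(r ^ (m + 1) * φ ((⇑L.symm)^[m + 1] x)) := by
      rw [← tsum_mul_left]
      congr 1; funext m
      rw [hr]
      field_simp
      ring_nf
      rw [mul_assoc (lamw * lamw ^ m) lamu, mul_inv_cancel₀ hu, mul_one]
    rw [e1, e2, Summable.tsum_eq_zero_add hg]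
    simp
end
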